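/- Correctness of the 2-SMIN comparison in the case π = 1: let ℓ, σ be natural numbers and N a natural number with N > 2^(σ+ℓ+3). Let x, y be integers with |x| ≤ 2^ℓ and |y| ≤ 2^ℓ, let r₁ be an integer with 1 ≤ r₁ < 2^σ, and let r₂ be an integer with 0 < r₂, 2·r₂ ≤ N, and 2·(r₁ + r₂) > N. Then the residue D = (r₁·(y − x) + r₂) mod N satisfies 2·D > N if and only if y > x. -/
import Mathlib


/-- Correctness of the 2-SMIN comparison in the case `π = 1`:
`D = (r₁·(y − x) + r₂) mod N` satisfies `2·D > N` iff `y > x`. -/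
theorem twoSMIN_compare_pi1 (ℓ σ N : ℕ) (hN : 2 ^ (σ + ℓ + 3) < N)
    (x y : ℤ) (hx : |x| ≤ 2 ^ ℓ) (hy : |y| ≤ 2 ^ ℓ)
    (r₁ : ℤ) (hr₁ : 1 ≤ r₁) (hr₁' : r₁ < 2 ^ σ)
    (r₂ : ℤ) (hr₂ : 0 < r₂) (hr₂' : 2 * r₂ ≤ (N : ℤ))
    (hsum : (N : ℤ) < 2 * (r₁ + r₂)) :
    2 * ((r₁ * (y - x) + r₂) % (N : ℤ)) > (N : ℤ) ↔ y > x := by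
  have hN' : (2:ℤ)^σ * 2^ℓ * 8 < N := by
    have h : ((2:ℤ))^(σ + ℓ + 3) < N := by exact_mod_cast hN
    calc (2:ℤ)^σ * 2^ℓ * 8 = 2^(σ+ℓ+3) := by ring
    _ < N := h
  obtain ⟨hx1, hx2⟩ := abs_le.mp hx
  obtain ⟨hy1, hy2⟩ := abs_le.mp hy
  have hB : (1:ℤ) ≤ 2 ^ ℓ := one_le_pow₀ one_le_two
  have hA : (1:ℤ) ≤ 2 ^ σ := one_le_pow₀ one_le_two
  have h1 : r₁ * (y - x) ≤ r₁ * (2 * 2 ^ ℓ) :=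
    mul_le_mul_of_nonneg_left (by linarith) (by linarith)
  have h2 : r₁ * (-(2 * 2 ^ ℓ)) ≤ r₁ * (y - x) :=
    mul_le_mul_of_nonneg_left (by linarith) (by linarith)
  have h3 : r₁ * (2 * 2 ^ ℓ) ≤ 2 ^ σ * (2 * 2 ^ ℓ) :=
    mul_le_mul_of_nonneg_right (le_of_lt hr₁') (by positivity)
  have ht0 : 0 < r₁ * (y - x) + r₂ := by nlinarith
  have htN : r₁ * (y - x) + r₂ < N := by nlinarith
  rw [Int.emod_eq_of_lt ht0.le htN]
  constructor
  · intro h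
    by_contra hle
    push_neg at hle
    have : r₁ * (y - x) ≤ 0 := mul_nonpos_of_nonneg_of_nonpos (by linarith) (by linarith)
    linarith
  · intro h
    have : r₁ * 1 ≤ r₁ * (y - x) := mul_le_mul_of_nonneg_left (by linarith) (by linarith)
    linarith
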